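/- (Brandt, t ≤ h) Let a, b be nonzero rationals, A = ℍ[ℚ, a, b], and O any maximal order of A. Then the number of conjugacy classes of maximal orders of A is at most the number of equivalence classes of left O-ideals; i.e., t(A) ≤ h(O) (as an inequality of cardinalities). -/

import Mathlib

open scoped Quaternion

/-- An order in the quaternion algebra `ℍ[ℚ, a, b]`: a subring (hence containing `1`)
which is finitely generated as a ℤ-module and contains a ℚ-basis of the algebra
(i.e. spans it over ℚ). -/
def IsOrder {a b : ℚ} (O : Subring ℍ[ℚ, a, b]) : Prop :=
  (∃ s : Finset ℍ[ℚ, a, b],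
      (Submodule.span ℤ (s : Set ℍ[ℚ, a, b]) : Set ℍ[ℚ, a, b]) = (O : Set ℍ[ℚ, a, b])) ∧
    Submodule.span ℚ (O : Set ℍ[ℚ, a, b]) = ⊤

/-- A maximal order: an order maximal under inclusion. -/
def IsMaximalOrder {a b : ℚ} (O : Subring ℍ[ℚ, a, b]) : Prop :=
  IsOrder O ∧ ∀ O' : Subring ℍ[ℚ, a, b], IsOrder O' → O ≤ O' → O' = O

/-- Two orders are conjugate (of the same type) if `O' = γ⁻¹·O·γ` for some
invertible (equivalently, of nonzero reduced norm) `γ` in the algebra. -/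
def AreConjugate {a b : ℚ} (O O' : Subring ℍ[ℚ, a, b]) : Prop :=
  ∃ γ : ℍ[ℚ, a, b]ˣ,
    ∀ x, x ∈ O' ↔ ∃ y ∈ O, x = (↑γ⁻¹ : ℍ[ℚ, a, b]) * y * (↑γ : ℍ[ℚ, a, b])

/-- A left `O`-ideal: a ℤ-submodule of the algebra, finitely generated as a ℤ-module,
containing a ℚ-basis of the algebra, and stable under left multiplication by `O`. -/
def IsLeftIdeal {a b : ℚ} (O : Subring ℍ[ℚ, a, b]) (I : Submodule ℤ ℍ[ℚ, a, b]) : Prop :=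
  I.FG ∧ Submodule.span ℚ (I : Set ℍ[ℚ, a, b]) = ⊤ ∧ ∀ o ∈ O, ∀ x ∈ I, o * x ∈ I

/-- Equivalence of left ideals: `I = J·γ` for some nonzero `γ`. -/
def IdealEquiv {a b : ℚ} (I J : Submodule ℤ ℍ[ℚ, a, b]) : Prop :=
  ∃ γ : ℍ[ℚ, a, b], γ ≠ 0 ∧ (I : Set ℍ[ℚ, a, b]) = (fun y => y * γ) '' (J : Set ℍ[ℚ, a, b])


open scoped Pointwise

variable {a b : ℚ}

/-- The right order of a lattice `I`. -/
def rightOrder (I : Submodule ℤ ℍ[ℚ,a,b]) : Subring ℍ[ℚ,a,b] where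
  carrier := {x | ∀ y ∈ I, y * x ∈ I}
  one_mem' := by intro y hy; simpa using hy
  mul_mem' := by intro x z hx hz y hy; rw [← mul_assoc]; exact hz _ (hx _ hy)
  add_mem' := by intro x z hx hz y hy; rw [mul_add]; exact I.add_mem (hx _ hy) (hz _ hy)
  zero_mem' := by intro y hy; rw [mul_zero]; exact I.zero_mem
  neg_mem' := by intro x hx y hy; rw [mul_neg]; exact I.neg_mem (hx _ hy)

theorem mem_rightOrder {I : Submodule ℤ ℍ[ℚ,a,b]} {x} :
    x ∈ rightOrder I ↔ ∀ y ∈ I, y * x ∈ I := Iff.rfl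

/-- Conjugation by a unit, as a ring automorphism. -/
def conjRE (γ : ℍ[ℚ,a,b]ˣ) : ℍ[ℚ,a,b] ≃+* ℍ[ℚ,a,b] where
  toFun x := ↑γ⁻¹ * x * ↑γ
  invFun x := ↑γ * x * ↑γ⁻¹
  left_inv x := by simp [mul_assoc]
  right_inv x := by simp [mul_assoc]
  map_mul' x y := by simp [mul_assoc]
  map_add' x y := by show _ = _; simp [mul_add, add_mul]

theorem conjRE_apply (γ : ℍ[ℚ,a,b]ˣ) (x : ℍ[ℚ,a,b]) :
    conjRE γ x = ↑γ⁻¹ * x * ↑γ := rfl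

theorem map_isOrder (e : ℍ[ℚ,a,b] ≃+* ℍ[ℚ,a,b]) {O₁ : Subring ℍ[ℚ,a,b]} (h : IsOrder O₁) :
    IsOrder (O₁.map (e : ℍ[ℚ,a,b] →+* ℍ[ℚ,a,b])) := by
  classical
  obtain ⟨⟨s, hs⟩, hsp⟩ := h
  have hco : ((O₁.map (e : ℍ[ℚ,a,b] →+* ℍ[ℚ,a,b]) : Subring ℍ[ℚ,a,b]) : Set ℍ[ℚ,a,b])
      = ⇑e '' (O₁ : Set ℍ[ℚ,a,b]) := by rw [Subring.coe_map]; rfl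
  constructor
  · refine ⟨s.image e, ?_⟩
    have h1 : Submodule.map e.toAddMonoidHom.toIntLinearMap (Submodule.span ℤ (s : Set ℍ[ℚ,a,b]))
        = Submodule.span ℤ (⇑e '' (s : Set ℍ[ℚ,a,b])) := by
      rw [Submodule.map_span]; rfl
    have h2 : ((s.image e : Finset ℍ[ℚ,a,b]) : Set ℍ[ℚ,a,b]) = ⇑e '' (s : Set ℍ[ℚ,a,b]) :=
      Finset.coe_image
    rw [h2, ← h1, Submodule.map_coe, hs, hco]
    rfl
  · have h1 : Submodule.map e.toAddMonoidHom.toRatLinearMap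
        (Submodule.span ℚ (O₁ : Set ℍ[ℚ,a,b]))
        = Submodule.span ℚ (⇑e '' (O₁ : Set ℍ[ℚ,a,b])) := by
      rw [Submodule.map_span]; rfl
    rw [hco, ← h1, hsp, Submodule.map_top, LinearMap.range_eq_top]
    exact e.surjective

theorem map_symm_map (e : ℍ[ℚ,a,b] ≃+* ℍ[ℚ,a,b]) (O₁ : Subring ℍ[ℚ,a,b]) :
    (O₁.map (e : ℍ[ℚ,a,b] →+* ℍ[ℚ,a,b])).map (e.symm : ℍ[ℚ,a,b] →+* ℍ[ℚ,a,b]) = O₁ := by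
  ext x
  simp only [Subring.mem_map]
  constructor
  · rintro ⟨y, ⟨z, hz, rfl⟩, rfl⟩
    simpa using hz
  · intro hx
    exact ⟨e x, ⟨x, hx, rfl⟩, e.symm_apply_apply x⟩

theorem map_isMaximalOrder (e : ℍ[ℚ,a,b] ≃+* ℍ[ℚ,a,b]) {O₁ : Subring ℍ[ℚ,a,b]}
    (h : IsMaximalOrder O₁) : IsMaximalOrder (O₁.map (e : ℍ[ℚ,a,b] →+* ℍ[ℚ,a,b])) := by
  refine ⟨map_isOrder e h.1, fun O' hO' hle => ?_⟩
  have h1 : O₁ ≤ O'.map (e.symm : ℍ[ℚ,a,b] →+* ℍ[ℚ,a,b]) := by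
    rw [← map_symm_map e O₁]
    intro x hx
    rw [Subring.mem_map] at hx ⊢
    obtain ⟨y, hy, rfl⟩ := hx
    exact ⟨y, hle hy, rfl⟩
  have h2 := h.2 _ (map_isOrder e.symm hO') h1
  have := congrArg (Subring.map (e : ℍ[ℚ,a,b] →+* ℍ[ℚ,a,b])) h2
  rwa [show (e : ℍ[ℚ,a,b] →+* ℍ[ℚ,a,b]) = (e.symm.symm : ℍ[ℚ,a,b] →+* ℍ[ℚ,a,b]) from rfl,
    map_symm_map e.symm O'] at this

theorem conj_eq_map {O₁ O₂ : Subring ℍ[ℚ,a,b]} (γ : ℍ[ℚ,a,b]ˣ)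
    (h : ∀ x, x ∈ O₂ ↔ ∃ y ∈ O₁, x = (↑γ⁻¹ : ℍ[ℚ,a,b]) * y * (↑γ : ℍ[ℚ,a,b])) :
    O₂ = O₁.map ((conjRE γ : ℍ[ℚ,a,b] ≃+* ℍ[ℚ,a,b]) : ℍ[ℚ,a,b] →+* ℍ[ℚ,a,b]) := by
  ext x
  rw [h x, Subring.mem_map]
  exact ⟨fun ⟨y, hy, hxy⟩ => ⟨y, hy, hxy.symm⟩, fun ⟨y, hy, hxy⟩ => ⟨y, hy, hxy.symm⟩⟩

theorem fg_of_le {M : Type*} [AddCommGroup M] {K I : Submodule ℤ M} (hI : I.FG) (h : K ≤ I) :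
    K.FG := by
  have : IsNoetherian ℤ I := isNoetherian_of_fg_of_noetherian I hI
  have h2 : (K.comap I.subtype).FG := IsNoetherian.noetherian _
  have h3 := h2.map I.subtype
  rwa [Submodule.map_comap_subtype, inf_eq_right.mpr h] at h3

theorem exists_unit {O : Subring ℍ[ℚ,a,b]} {I J : Submodule ℤ ℍ[ℚ,a,b]}
    (hI : IsLeftIdeal O I) {γ : ℍ[ℚ,a,b]} (hγ : γ ≠ 0)
    (hset : (I : Set ℍ[ℚ,a,b]) = (fun y => y * γ) '' (J : Set ℍ[ℚ,a,b])) :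
    ∃ u : ℍ[ℚ,a,b]ˣ, (u : ℍ[ℚ,a,b]) = γ := by
  set c : ℚ := (γ * star γ).re with hc
  have hmul : γ * star γ = (c : ℍ[ℚ,a,b]) := QuaternionAlgebra.mul_star_eq_coe γ
  have hmul' : star γ * γ = (c : ℍ[ℚ,a,b]) := by
    rw [star_comm_self']; exact hmul
  have hcne : c ≠ 0 := by
    intro h0
    have hker : (I : Set ℍ[ℚ,a,b]) ⊆ (LinearMap.ker (LinearMap.mulRight ℚ (star γ)) :
        Submodule ℚ ℍ[ℚ,a,b]) := by
      intro x hx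
      rw [hset] at hx
      obtain ⟨j, hj, rfl⟩ := hx
      simp only [SetLike.mem_coe, LinearMap.mem_ker, LinearMap.mulRight_apply]
      rw [mul_assoc, hmul, h0]
      simp
    have := Submodule.span_le.mpr hker
    rw [hI.2.1, top_le_iff] at this
    have h1 : (1 : ℍ[ℚ,a,b]) ∈ LinearMap.ker (LinearMap.mulRight ℚ (star γ)) := by
      rw [this]; trivial
    simp only [LinearMap.mem_ker, LinearMap.mulRight_apply, one_mul] at h1
    exact hγ (by simpa using congrArg star h1)
  refine ⟨⟨γ, (c⁻¹ : ℚ) * star γ, ?_, ?_⟩, rfl⟩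
  · rw [← mul_assoc, ← QuaternionAlgebra.coe_commutes, mul_assoc, hmul,
      ← QuaternionAlgebra.coe_mul, inv_mul_cancel₀ hcne]; rfl
  · rw [mul_assoc, hmul', ← QuaternionAlgebra.coe_mul, inv_mul_cancel₀ hcne]; rfl

theorem rightOrder_conj {I J : Submodule ℤ ℍ[ℚ,a,b]} (u : ℍ[ℚ,a,b]ˣ)
    (hset : (I : Set ℍ[ℚ,a,b]) = (fun y => y * (u : ℍ[ℚ,a,b])) '' (J : Set ℍ[ℚ,a,b])) :
    ∀ x, x ∈ rightOrder I ↔ ∃ y ∈ rightOrder J, x = (↑u⁻¹ : ℍ[ℚ,a,b]) * y * (↑u : ℍ[ℚ,a,b]) := by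
  have hmemI : ∀ {z}, z ∈ I ↔ ∃ j ∈ J, j * (u : ℍ[ℚ,a,b]) = z := by
    intro z
    constructor
    · intro hz
      have : z ∈ (I : Set ℍ[ℚ,a,b]) := hz
      rw [hset] at this
      obtain ⟨j, hj, hju⟩ := this
      exact ⟨j, hj, hju⟩
    · rintro ⟨j, hj, rfl⟩
      show j * (u : ℍ[ℚ,a,b]) ∈ (I : Set ℍ[ℚ,a,b])
      rw [hset]; exact ⟨j, hj, rfl⟩
  intro x
  constructor
  · intro hx
    refine ⟨↑u * x * ↑u⁻¹, ?_, by simp [mul_assoc]⟩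
    intro j hj
    have h1 : j * (u : ℍ[ℚ,a,b]) ∈ I := hmemI.mpr ⟨j, hj, rfl⟩
    have h2 : j * (u : ℍ[ℚ,a,b]) * x ∈ I := hx _ h1
    obtain ⟨j', hj', hj'e⟩ := hmemI.mp h2
    have : j * (↑u * x * ↑u⁻¹) = j' := by
      have := congrArg (fun z => z * (↑u⁻¹ : ℍ[ℚ,a,b])) hj'e
      simpa [mul_assoc] using this.symm
    rw [this]; exact hj'
  · rintro ⟨y, hy, rfl⟩
    intro z hz
    obtain ⟨j, hj, rfl⟩ := hmemI.mp hz
    have h1 : j * y ∈ J := hy _ hj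
    have : j * ↑u * (↑u⁻¹ * y * ↑u) = (j * y) * (u : ℍ[ℚ,a,b]) := by
      simp [mul_assoc]
    rw [this]
    exact hmemI.mpr ⟨j * y, h1, rfl⟩

/-- The ℤ-submodule attached to a subring. -/
def subringLattice (S : Subring ℍ[ℚ,a,b]) : Submodule ℤ ℍ[ℚ,a,b] :=
  AddSubgroup.toIntSubmodule S.toAddSubgroup

theorem mem_subringLattice {S : Subring ℍ[ℚ,a,b]} {x} : x ∈ subringLattice S ↔ x ∈ S := Iff.rfl

theorem subringLattice_eq_span {S : Subring ℍ[ℚ,a,b]} {s : Finset ℍ[ℚ,a,b]}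
    (hs : (Submodule.span ℤ (s : Set ℍ[ℚ,a,b]) : Set ℍ[ℚ,a,b]) = (S : Set ℍ[ℚ,a,b])) :
    Submodule.span ℤ (s : Set ℍ[ℚ,a,b]) = subringLattice S :=
  SetLike.ext' hs

theorem linking_ideal {O O' : Subring ℍ[ℚ,a,b]} (hO : IsMaximalOrder O)
    (hO' : IsMaximalOrder O') :
    IsLeftIdeal O (subringLattice O * subringLattice O') ∧
      rightOrder (subringLattice O * subringLattice O') = O' := by
  classical
  set P := subringLattice O with hP
  set Q := subringLattice O' with hQ
  set I := P * Q with hI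
  have hPP : P * P ≤ P := Submodule.mul_le.2 fun m hm n hn =>
    mem_subringLattice.mpr (mul_mem (mem_subringLattice.mp hm) (mem_subringLattice.mp hn))
  have hQQ : Q * Q ≤ Q := Submodule.mul_le.2 fun m hm n hn =>
    mem_subringLattice.mpr (mul_mem (mem_subringLattice.mp hm) (mem_subringLattice.mp hn))
  have hleft : ∀ o ∈ O, ∀ x ∈ I, o * x ∈ I := by
    intro o ho x hx
    have h1 : o * x ∈ P * (P * Q) := Submodule.mul_mem_mul (mem_subringLattice.mpr ho) hx
    rw [← mul_assoc] at h1
    exact mul_le_mul' hPP le_rfl h1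
  have hright : ∀ o' ∈ O', ∀ x ∈ I, x * o' ∈ I := by
    intro o' ho' x hx
    have h1 : x * o' ∈ (P * Q) * Q := Submodule.mul_mem_mul hx (mem_subringLattice.mpr ho')
    rw [mul_assoc] at h1
    exact mul_le_mul' le_rfl hQQ h1
  have hQle : Q ≤ I := by
    intro q hq
    have := Submodule.mul_mem_mul (M := P) (mem_subringLattice.mpr O.one_mem) hq
    rwa [one_mul] at this
  have honeI : (1 : ℍ[ℚ,a,b]) ∈ I := hQle (mem_subringLattice.mpr O'.one_mem)
  have hspan : Submodule.span ℚ (I : Set ℍ[ℚ,a,b]) = ⊤ := by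
    rw [eq_top_iff, ← hO'.1.2]
    exact Submodule.span_mono hQle
  have hfg : I.FG := by
    obtain ⟨s, hs⟩ := hO.1.1
    obtain ⟨t, ht⟩ := hO'.1.1
    refine ⟨s * t, ?_⟩
    rw [Finset.coe_mul, ← Submodule.span_mul_span, subringLattice_eq_span hs,
      subringLattice_eq_span ht]
  have hIdeal : IsLeftIdeal O I := ⟨hfg, hspan, hleft⟩
  refine ⟨hIdeal, ?_⟩
  have hO'le : O' ≤ rightOrder I := fun o' ho' y hy => hright o' ho' y hy
  have hroI : ∀ x ∈ rightOrder I, x ∈ I := by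
    intro x hx
    have := hx 1 honeI
    rwa [one_mul] at this
  have hK : IsOrder (rightOrder I) := by
    constructor
    · have hKfg : (subringLattice (rightOrder I)).FG :=
        fg_of_le hfg (fun x hx => hroI x (mem_subringLattice.mp hx))
      obtain ⟨s, hs⟩ := hKfg
      exact ⟨s, by rw [hs]; rfl⟩
    · rw [eq_top_iff, ← hO'.1.2]
      exact Submodule.span_mono hO'le
  exact hO'.2 _ hK hO'le

theorem type_number_le_class_number (a b : ℚ) (ha : a ≠ 0) (hb : b ≠ 0)
    (O : Subring ℍ[ℚ, a, b]) (hO : IsMaximalOrder O) :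
    Cardinal.mk (Quot fun O₁ O₂ : {O' : Subring ℍ[ℚ, a, b] // IsMaximalOrder O'} =>
        AreConjugate O₁.1 O₂.1)
      ≤ Cardinal.mk (Quot fun I J : {I : Submodule ℤ ℍ[ℚ, a, b] // IsLeftIdeal O I} =>
        IdealEquiv I.1 J.1) := by
  classical
  let f : {I : Submodule ℤ ℍ[ℚ, a, b] // IsLeftIdeal O I} →
      Quot (fun O₁ O₂ : {O' : Subring ℍ[ℚ, a, b] // IsMaximalOrder O'} =>
        AreConjugate O₁.1 O₂.1) :=
    fun I => if h : IsMaximalOrder (rightOrder I.1) then Quot.mk _ ⟨rightOrder I.1, h⟩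
      else Quot.mk _ ⟨O, hO⟩
  have hresp : ∀ I J, IdealEquiv I.1 J.1 → f I = f J := by
    intro I J hIJ
    obtain ⟨γ, hγ, hset⟩ := hIJ
    obtain ⟨u, rfl⟩ := exists_unit I.2 hγ hset
    have hconj := rightOrder_conj u hset
    have heq : rightOrder I.1 =
        (rightOrder J.1).map ((conjRE u : ℍ[ℚ,a,b] ≃+* ℍ[ℚ,a,b]) : ℍ[ℚ,a,b] →+* ℍ[ℚ,a,b]) :=
      conj_eq_map u hconj
    have hiff : IsMaximalOrder (rightOrder I.1) ↔ IsMaximalOrder (rightOrder J.1) := by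
      constructor
      · intro h
        have h2 : rightOrder J.1 = (rightOrder I.1).map
            ((conjRE u).symm : ℍ[ℚ,a,b] →+* ℍ[ℚ,a,b]) := by
          rw [heq, map_symm_map]
        rw [h2]; exact map_isMaximalOrder _ h
      · intro h; rw [heq]; exact map_isMaximalOrder _ h
    by_cases h : IsMaximalOrder (rightOrder I.1)
    · have h' : IsMaximalOrder (rightOrder J.1) := hiff.mp h
      show f I = f J
      simp only [f, dif_pos h, dif_pos h']
      exact (Quot.sound ⟨u, hconj⟩).symm
    · have h' : ¬ IsMaximalOrder (rightOrder J.1) := fun hh => h (hiff.mpr hh)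
      simp only [f, dif_neg h, dif_neg h']
  refine Cardinal.mk_le_of_surjective (f := Quot.lift f hresp) ?_
  intro q
  induction q using Quot.ind with
  | _ O' =>
    obtain ⟨O', hO'⟩ := O'
    obtain ⟨hIdeal, hro⟩ := linking_ideal hO hO'
    refine ⟨Quot.mk _ ⟨_, hIdeal⟩, ?_⟩
    show f ⟨_, hIdeal⟩ = _
    have hmax : IsMaximalOrder (rightOrder (subringLattice O * subringLattice O')) := by
      rw [hro]; exact hO'
    simp only [f, dif_pos hmax]
    congr 1
    exact Subtype.ext hro
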